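/- Let (T₁, T₂) be a doubly twisted pair of isometries on a Hilbert space H. Then H decomposes uniquely as H = H_{uu} ⊕ H_{us} ⊕ H_{su} ⊕ H_{ss}, where H_{uu} = ⋂_{m₁,m₂ ∈ ℤ₊} T₁^{m₁}T₂^{m₂}H, H_{us} = ⊕_{m₂≥0} T₂^{m₂}(⋂_{m₁≥0} T₁^{m₁} ker T₂*), H_{su} = ⊕_{m₁≥0} T₁^{m₁}(⋂_{m₂≥0} T₂^{m₂} ker T₁*), H_{ss} = ⊕_{m₁,m₂≥0} T₁^{m₁}T₂^{m₂}(ker T₁* ∩ ker T₂*); each subspace reduces both T₁ and T₂; T₁ is unitary on H_{uu} and H_{us}, a unilateral shift on H_{su} and H_{ss}; T₂ is unitary on H_{uu} and H_{su}, a unilateral shift on H_{us} and H_{ss}. -/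

import Mathlib

open ContinuousLinearMap

variable {H : Type*} [NormedAddCommGroup H] [InnerProductSpace ℂ H] [CompleteSpace H]

/-- A closed subspace `M` reduces the operator `T`. -/
def Reduces (T : H →L[ℂ] H) (M : Submodule ℂ H) : Prop :=
  (∀ x ∈ M, T x ∈ M) ∧ (∀ x ∈ M, adjoint T x ∈ M)

/-- For an isometry `T` and a `T`-reducing subspace `M`, the restriction `T|_M` is unitary
iff `T M = M`. -/
def UnitaryOn (T : H →L[ℂ] H) (M : Submodule ℂ H) : Prop :=
  M.map (T : H →ₗ[ℂ] H) = M

/-- For an isometry `T` and a `T`-reducing subspace `M`, the restriction `T|_M` is a unilateral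
shift iff `⋂ₙ Tⁿ M = {0}`. -/
def ShiftOn (T : H →L[ℂ] H) (M : Submodule ℂ H) : Prop :=
  (⨅ n : ℕ, M.map ((T ^ n : H →L[ℂ] H) : H →ₗ[ℂ] H)) = ⊥

/-- `H_uu = ⋂ T₁^{m₁} T₂^{m₂} H`. -/
noncomputable def Huu (T₁ T₂ : H →L[ℂ] H) : Submodule ℂ H :=
  ⨅ m : ℕ × ℕ, LinearMap.range (((T₁ ^ m.1) ∘L (T₂ ^ m.2) : H →L[ℂ] H) : H →ₗ[ℂ] H)

/-- `H_us = ⊕_{m₂} T₂^{m₂} (⋂_{m₁} T₁^{m₁} ker T₂*)`. -/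
noncomputable def Hus (T₁ T₂ : H →L[ℂ] H) : Submodule ℂ H :=
  (⨆ m₂ : ℕ, (⨅ m₁ : ℕ, (LinearMap.ker ((adjoint T₂ : H →L[ℂ] H) : H →ₗ[ℂ] H)).map ((T₁ ^ m₁ : H →L[ℂ] H) : H →ₗ[ℂ] H)).map
    ((T₂ ^ m₂ : H →L[ℂ] H) : H →ₗ[ℂ] H)).topologicalClosure

/-- `H_su = ⊕_{m₁} T₁^{m₁} (⋂_{m₂} T₂^{m₂} ker T₁*)`. -/
noncomputable def Hsu (T₁ T₂ : H →L[ℂ] H) : Submodule ℂ H :=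
  (⨆ m₁ : ℕ, (⨅ m₂ : ℕ, (LinearMap.ker ((adjoint T₁ : H →L[ℂ] H) : H →ₗ[ℂ] H)).map ((T₂ ^ m₂ : H →L[ℂ] H) : H →ₗ[ℂ] H)).map
    ((T₁ ^ m₁ : H →L[ℂ] H) : H →ₗ[ℂ] H)).topologicalClosure

/-- `H_ss = ⊕_{m₁,m₂} T₁^{m₁} T₂^{m₂} (ker T₁* ∩ ker T₂*)`. -/
noncomputable def Hss (T₁ T₂ : H →L[ℂ] H) : Submodule ℂ H :=
  (⨆ m : ℕ × ℕ, (LinearMap.ker ((adjoint T₁ : H →L[ℂ] H) : H →ₗ[ℂ] H) ⊓ LinearMap.ker ((adjoint T₂ : H →L[ℂ] H) : H →ₗ[ℂ] H)).map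
    (((T₁ ^ m.1) ∘L (T₂ ^ m.2) : H →L[ℂ] H) : H →ₗ[ℂ] H)).topologicalClosure


local notation "⟪" x ", " y "⟫" => @inner ℂ _ _ x y

section Word
variable {M : Type*} [Monoid M] {A B W : M}

lemma word1 (hWB : Commute W B) (hrel : B * A = W * (A * B)) :
    ∀ m : ℕ, B ^ m * A = W ^ m * (A * B ^ m) := by
  intro m
  induction m with
  | zero => simp
  | succ m ih =>
    calc B ^ (m+1) * A = B ^ m * (B * A) := by rw [pow_succ, mul_assoc]
      _ = B ^ m * (W * (A * B)) := by rw [hrel]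
      _ = W * (B ^ m * A * B) := by
          rw [← mul_assoc, (hWB.symm.pow_left m).eq]; noncomm_ring
      _ = W * (W ^ m * (A * B ^ m) * B) := by rw [ih]
      _ = W ^ (m+1) * (A * B ^ (m+1)) := by
          rw [pow_succ' W, pow_succ B]; noncomm_ring

lemma word2 (hWA : Commute W A) (hWB : Commute W B) (hrel : B * A = W * (A * B)) :
    ∀ m a : ℕ, B ^ m * A ^ a = W ^ (m * a) * (A ^ a * B ^ m) := by
  intro m a
  induction a with
  | zero => simp
  | succ a ih =>
    calc B ^ m * A ^ (a+1) = B ^ m * A ^ a * A := by rw [pow_succ, mul_assoc]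
      _ = W ^ (m*a) * (A ^ a * (B ^ m * A)) := by rw [ih]; noncomm_ring
      _ = W ^ (m*a) * (A ^ a * (W ^ m * (A * B ^ m))) := by rw [word1 hWB hrel]
      _ = W ^ (m*a) * (W ^ m * (A ^ a * (A * B ^ m))) := by
          rw [← mul_assoc (A^a), ← ((hWA.pow_left m).pow_right a).eq, mul_assoc]
      _ = W ^ (m*(a+1)) * (A ^ (a+1) * B ^ m) := by
          rw [← mul_assoc, ← pow_add, pow_succ A, Nat.mul_succ]
          noncomm_ring
end Word



/-- the inner wandering-type space of `Hus`. -/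
noncomputable def KK (T₁ T₂ : H →L[ℂ] H) : Submodule ℂ H :=
  ⨅ m₁ : ℕ, (LinearMap.ker ((adjoint T₂ : H →L[ℂ] H) : H →ₗ[ℂ] H)).map ((T₁ ^ m₁ : H →L[ℂ] H) : H →ₗ[ℂ] H)

lemma Hus_eq (T₁ T₂ : H →L[ℂ] H) :
    Hus T₁ T₂ = (⨆ m₂ : ℕ, (KK T₁ T₂).map ((T₂ ^ m₂ : H →L[ℂ] H) : H →ₗ[ℂ] H)).topologicalClosure := rfl

lemma Hsu_eq (T₁ T₂ : H →L[ℂ] H) :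
    Hsu T₁ T₂ = (⨆ m₁ : ℕ, (KK T₂ T₁).map ((T₁ ^ m₁ : H →L[ℂ] H) : H →ₗ[ℂ] H)).topologicalClosure := rfl

lemma Hsu_eq_Hus (T₁ T₂ : H →L[ℂ] H) : Hsu T₁ T₂ = Hus T₂ T₁ := rfl

lemma mem_Huu_iff {T₁ T₂ : H →L[ℂ] H} {x : H} :
    x ∈ Huu T₁ T₂ ↔ ∀ a b : ℕ, ∃ y, (T₁ ^ a) ((T₂ ^ b) y) = x := by
  rw [Huu]
  simp only [Submodule.mem_iInf, LinearMap.mem_range, ContinuousLinearMap.coe_comp',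
    Function.comp_apply]
  exact ⟨fun hx a b => hx (a, b), fun hx m => hx m.1 m.2⟩

lemma mem_KK_iff {T₁ T₂ : H →L[ℂ] H} {x : H} :
    x ∈ KK T₁ T₂ ↔ ∀ a : ℕ, ∃ k, adjoint T₂ k = 0 ∧ (T₁ ^ a) k = x := by
  rw [KK]
  simp only [Submodule.mem_iInf, Submodule.mem_map, LinearMap.mem_ker, ContinuousLinearMap.coe_coe]

lemma KK_ker {T₁ T₂ : H →L[ℂ] H} {s : H} (hs : s ∈ KK T₁ T₂) : adjoint T₂ s = 0 := by
  obtain ⟨k, hk1, hk2⟩ := mem_KK_iff.1 hs 0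
  rw [pow_zero, ContinuousLinearMap.one_apply] at hk2
  rwa [hk2] at hk1

lemma isOrtho_of_forall {S S' : Submodule ℂ H} (hyp : ∀ x ∈ S, ∀ y ∈ S', ⟪x, y⟫ = 0) :
    S ⟂ S' := fun x hx => (Submodule.mem_orthogonal' S' x).2 fun u hu => hyp x hx u hu

lemma ortho_closure_right {S V : Submodule ℂ H} (hsv : S ⟂ V) :
    S ⟂ V.topologicalClosure := by
  have h1 : V.topologicalClosure ≤ Sᗮ :=
    Submodule.topologicalClosure_minimal V hsv.ge S.isClosed_orthogonal
  exact Submodule.IsOrtho.symm h1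

lemma ortho_closure_both {S V : Submodule ℂ H} (hsv : S ⟂ V) :
    S.topologicalClosure ⟂ V.topologicalClosure :=
  ((ortho_closure_right (ortho_closure_right hsv).symm).symm : _)

lemma pow_split {T : H →L[ℂ] H} (m n : ℕ) (z : H) :
    (T ^ (m + n)) z = (T ^ m) ((T ^ n) z) := by
  rw [pow_add]; rfl

lemma pow_succ_apply {T : H →L[ℂ] H} (a : ℕ) (z : H) : (T ^ (a+1)) z = (T ^ a) (T z) := by
  rw [pow_succ]; rfl

lemma pow_succ_apply' {T : H →L[ℂ] H} (a : ℕ) (z : H) : (T ^ (a+1)) z = T ((T ^ a) z) := by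
  rw [pow_succ']; rfl

lemma self_swap {T : H →L[ℂ] H} (a : ℕ) (z : H) : T ((T ^ a) z) = (T ^ a) (T z) := by
  rw [← pow_succ_apply', pow_succ_apply]

lemma cpow {W X : H →L[ℂ] H} (hc : Commute W X) (c a : ℕ) (z : H) :
    (W ^ c) ((X ^ a) z) = (X ^ a) ((W ^ c) z) := by
  have e := ContinuousLinearMap.ext_iff.mp ((hc.pow_pow c a).eq) z
  simpa only [ContinuousLinearMap.mul_apply] using e

lemma closure_invariant {T : H →L[ℂ] H} {S : Submodule ℂ H}
    (hS : Submodule.map (T : H →ₗ[ℂ] H) S ≤ S.topologicalClosure) :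
    ∀ x ∈ S.topologicalClosure, T x ∈ S.topologicalClosure := by
  intro x hx
  have hsub : S ≤ S.topologicalClosure.comap (T : H →ₗ[ℂ] H) := fun y hy => hS ⟨y, hy, rfl⟩
  have hcl : IsClosed ((S.topologicalClosure.comap (T : H →ₗ[ℂ] H) : Submodule ℂ H) : Set H) :=
    (S.isClosed_topologicalClosure).preimage T.continuous
  exact Submodule.topologicalClosure_minimal S hsub hcl hx

lemma mem_Hus_of {T₁ T₂ : H →L[ℂ] H} (m : ℕ) {s : H} (hs : s ∈ KK T₁ T₂) :
    (T₂ ^ m) s ∈ Hus T₁ T₂ := by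
  rw [Hus_eq]
  exact Submodule.le_topologicalClosure _
    (Submodule.mem_iSup_of_mem m ⟨s, hs, rfl⟩)

lemma mem_Hsu_of {T₁ T₂ : H →L[ℂ] H} (m : ℕ) {s : H} (hs : s ∈ KK T₂ T₁) :
    (T₁ ^ m) s ∈ Hsu T₁ T₂ := mem_Hus_of m hs

lemma isClosed_Hus (T₁ T₂ : H →L[ℂ] H) : IsClosed ((Hus T₁ T₂ : Submodule ℂ H) : Set H) := by
  rw [Hus]; exact Submodule.isClosed_topologicalClosure _

lemma isClosed_Hsu (T₁ T₂ : H →L[ℂ] H) : IsClosed ((Hsu T₁ T₂ : Submodule ℂ H) : Set H) := by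
  rw [Hsu]; exact Submodule.isClosed_topologicalClosure _

lemma isClosed_Hss (T₁ T₂ : H →L[ℂ] H) : IsClosed ((Hss T₁ T₂ : Submodule ℂ H) : Set H) := by
  rw [Hss]; exact Submodule.isClosed_topologicalClosure _

lemma mem_Hss_of {T₁ T₂ : H →L[ℂ] H} (a b : ℕ) {w : H}
    (hw1 : adjoint T₁ w = 0) (hw2 : adjoint T₂ w = 0) :
    (T₁ ^ a) ((T₂ ^ b) w) ∈ Hss T₁ T₂ := by
  rw [Hss]
  exact Submodule.le_topologicalClosure _
    (Submodule.mem_iSup_of_mem (a, b) ⟨w, ⟨hw1, hw2⟩, rfl⟩)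

structure DTP (T₁ T₂ U : H →L[ℂ] H) : Prop where
  h1 : adjoint T₁ * T₁ = 1
  h2 : adjoint T₂ * T₂ = 1
  hU1 : adjoint U * U = 1
  hU2 : U * adjoint U = 1
  c1 : Commute U T₁
  c2 : Commute U T₂
  tw1 : T₁ * T₂ = U * (T₂ * T₁)
  tw2 : adjoint T₁ * T₂ = adjoint U * (T₂ * adjoint T₁)

namespace DTP
variable {T₁ T₂ U : H →L[ℂ] H} (h : DTP T₁ T₂ U)
include h

/-- `U` as a unit. -/
noncomputable def u : (H →L[ℂ] H)ˣ := ⟨U, adjoint U, h.hU2, h.hU1⟩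

lemma cV1 : Commute (adjoint U) T₁ := h.c1.units_inv_left (u := h.u)
lemma cV2 : Commute (adjoint U) T₂ := h.c2.units_inv_left (u := h.u)

lemma cVA1 : Commute (adjoint U) (adjoint T₁) := by
  have := congrArg adjoint h.c1.eq
  simp only [mul_def, adjoint_comp] at this
  exact this.symm

lemma cVA2 : Commute (adjoint U) (adjoint T₂) := by
  have := congrArg adjoint h.c2.eq
  simp only [mul_def, adjoint_comp] at this
  exact this.symm

lemma cA1 : Commute U (adjoint T₁) := by
  have := h.cVA1.units_inv_left (u := h.u⁻¹)
  simpa [u] using this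

lemma cA2 : Commute U (adjoint T₂) := by
  have := h.cVA2.units_inv_left (u := h.u⁻¹)
  simpa [u] using this

/-- `T₂ T₁ = U* T₁ T₂`. -/
lemma t21 : T₂ * T₁ = adjoint U * (T₁ * T₂) := by
  rw [h.tw1, ← mul_assoc, ← mul_assoc, h.hU1, one_mul]

/-- `A₂ T₁ = T₁ A₂ U`. -/
lemma a21 : adjoint T₂ * T₁ = T₁ * (adjoint T₂ * U) := by
  have := congrArg adjoint h.tw2
  simp only [mul_def, adjoint_comp, adjoint_adjoint] at this
  simpa [← mul_def, mul_assoc] using this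

/-- `A₁ A₂ = A₂ A₁ U`. -/
lemma aa12 : adjoint T₁ * adjoint T₂ = adjoint T₂ * (adjoint T₁ * U) := by
  have := congrArg adjoint h.t21
  simp only [mul_def, adjoint_comp, adjoint_adjoint] at this
  simpa [← mul_def, mul_assoc] using this

/-- symmetry: `(T₂, T₁, U*)` is also a DTP. -/
lemma symm : DTP T₂ T₁ (adjoint U) where
  h1 := h.h2
  h2 := h.h1
  hU1 := by rw [adjoint_adjoint]; exact h.hU2
  hU2 := by rw [adjoint_adjoint]; exact h.hU1
  c1 := h.cV2
  c2 := h.cV1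
  tw1 := by rw [h.t21]
  tw2 := by
    rw [adjoint_adjoint]
    have := h.a21
    rw [← (h.cA2).eq] at this
    rw [this, ← mul_assoc, ← h.c1.eq, mul_assoc]


omit h

lemma adjoint_pow' (T : H →L[ℂ] H) (n : ℕ) : adjoint (T ^ n) = (adjoint T) ^ n := by
  induction n with
  | zero =>
    simp only [pow_zero]
    rw [ContinuousLinearMap.one_def, adjoint_id]
  | succ n ih => rw [pow_succ, pow_succ', mul_def, adjoint_comp, ih, mul_def]

lemma pow_iso {T : H →L[ℂ] H} (hT : adjoint T * T = 1) (n : ℕ) :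
    (adjoint T) ^ n * T ^ n = 1 := by
  induction n with
  | zero => simp
  | succ n ih =>
    calc (adjoint T) ^ (n+1) * T ^ (n+1) = (adjoint T) ^ n * (adjoint T * T) * T ^ n := by
          rw [pow_succ, pow_succ']; noncomm_ring
      _ = 1 := by rw [hT, mul_one, ih]

lemma iso_inner {T : H →L[ℂ] H} (hT : adjoint T * T = 1) (x y : H) :
    ⟪T x, T y⟫ = ⟪x, y⟫ := by
  rw [← adjoint_inner_left, ← mul_apply_eq_comp, hT, one_apply_eq_self]

lemma iso_pow_inner {T : H →L[ℂ] H} (hT : adjoint T * T = 1) (n : ℕ) (x y : H) :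
    ⟪(T ^ n) x, (T ^ n) y⟫ = ⟪x, y⟫ := by
  rw [← adjoint_inner_left, ← mul_apply_eq_comp, adjoint_pow' T n, pow_iso hT, one_apply_eq_self]

lemma apow_tpow {T : H →L[ℂ] H} (hT : adjoint T * T = 1) (n : ℕ) (x : H) :
    ((adjoint T) ^ n) ((T ^ n) x) = x := by
  rw [← mul_apply_eq_comp, pow_iso hT, one_apply_eq_self]

lemma iso_inj {T : H →L[ℂ] H} (hT : adjoint T * T = 1) {x y : H} (hxy : T x = T y) :
    x = y := by
  have : (adjoint T) (T x) = (adjoint T) (T y) := by rw [hxy]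
  rwa [← mul_apply_eq_comp, ← mul_apply_eq_comp, hT, one_apply_eq_self, one_apply_eq_self] at this

include h

lemma a1t1 (x : H) : adjoint T₁ (T₁ x) = x := by rw [← mul_apply_eq_comp, h.h1, one_apply_eq_self]
lemma a2t2 (x : H) : adjoint T₂ (T₂ x) = x := by rw [← mul_apply_eq_comp, h.h2, one_apply_eq_self]

/-- `A₂ T₁ = U (T₁ A₂)`. -/
lemma a21' : adjoint T₂ * T₁ = U * (T₁ * adjoint T₂) := by
  rw [h.a21, ← h.cA2.eq, ← mul_assoc, ← h.c1.eq, mul_assoc]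

/-- `A₂ A₁ = V (A₁ A₂)`. -/
lemma aa21' : adjoint T₂ * adjoint T₁ = adjoint U * (adjoint T₁ * adjoint T₂) := by
  have e1 : adjoint T₁ * adjoint T₂ * adjoint U
      = adjoint T₂ * adjoint T₁ * (U * adjoint U) := by
    rw [h.aa12]; noncomm_ring
  rw [h.hU2, mul_one] at e1
  rw [← e1, (h.cVA1.symm.mul_left h.cVA2.symm).eq]

/-- `T₂^m T₁^a = V^(ma) (T₁^a T₂^m)`. -/
lemma w21 (m a : ℕ) : T₂ ^ m * T₁ ^ a = (adjoint U) ^ (m*a) * (T₁ ^ a * T₂ ^ m) :=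
  word2 h.cV1 h.cV2 h.t21 m a

/-- `T₁^a T₂^m = U^(am) (T₂^m T₁^a)`. -/
lemma w12 (a m : ℕ) : T₁ ^ a * T₂ ^ m = U ^ (a*m) * (T₂ ^ m * T₁ ^ a) :=
  word2 h.c2 h.c1 h.tw1 a m

/-- `A₁^a T₂^m = V^(am) (T₂^m A₁^a)`. -/
lemma wA1T2 (a m : ℕ) : (adjoint T₁) ^ a * T₂ ^ m
    = (adjoint U) ^ (a*m) * (T₂ ^ m * (adjoint T₁) ^ a) :=
  word2 h.cV2 h.cVA1 h.tw2 a m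

/-- `A₂^m T₁^a = U^(ma) (T₁^a A₂^m)`. -/
lemma wA2T1 (m a : ℕ) : (adjoint T₂) ^ m * T₁ ^ a
    = U ^ (m*a) * (T₁ ^ a * (adjoint T₂) ^ m) :=
  word2 h.c1 h.cA2 h.a21' m a

/-- `A₂^m A₁^a = V^(ma) (A₁^a A₂^m)`. -/
lemma wA2A1 (m a : ℕ) : (adjoint T₂) ^ m * (adjoint T₁) ^ a
    = (adjoint U) ^ (m*a) * ((adjoint T₁) ^ a * (adjoint T₂) ^ m) :=
  word2 h.cVA1 h.cVA2 h.aa21' m a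

omit h

lemma pt {f g : H →L[ℂ] H} (e : f = g) (x : H) : f x = g x :=
  ContinuousLinearMap.ext_iff.mp e x

/-- Key Wold step: if `x ⟂ Tᵐ((1 - TT*)T*ᵐ x)` for all `m`, then `x = Tⁿ T*ⁿ x` for all `n`. -/
lemma wold_key {T : H →L[ℂ] H} (hT : adjoint T * T = 1) (x : H)
    (hx : ∀ m : ℕ, ⟪x, (T ^ m) (((adjoint T) ^ m) x
      - T (adjoint T (((adjoint T) ^ m) x)))⟫ = 0) :
    ∀ n, (T ^ n) (((adjoint T) ^ n) x) = x := by
  intro n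
  induction n with
  | zero => simp
  | succ n ih =>
    set y := ((adjoint T) ^ n) x with hy
    set d := y - T (adjoint T y) with hd
    have hAd : adjoint T d = 0 := by
      rw [hd, map_sub, ← mul_apply_eq_comp (adjoint T) T, hT, one_apply_eq_self, sub_self]
    have hdd : ⟪d, d⟫ = 0 := by
      have h2 : ⟪T (adjoint T y), d⟫ = 0 := by
        rw [← adjoint_inner_right, hAd, inner_zero_right]
      have h3 : ⟪y, d⟫ = 0 := by
        have := hx n
        rwa [← adjoint_inner_left, adjoint_pow'] at this
      calc ⟪d, d⟫ = ⟪y, d⟫ - ⟪T (adjoint T y), d⟫ := by rw [hd, inner_sub_left]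
        _ = 0 := by rw [h2, h3, sub_zero]
    have hd0 : d = 0 := inner_self_eq_zero.mp hdd
    have hTy : T (adjoint T y) = y := by
      have := sub_eq_zero.mp (hd ▸ hd0)
      exact this.symm
    have e1 : (T ^ (n+1)) (((adjoint T) ^ (n+1)) x) = (T ^ n) (T (adjoint T y)) := by
      rw [pow_succ T, pow_succ' (adjoint T)]
      simp only [mul_apply_eq_comp]; rfl
    rw [e1, hTy, ih]

include h

lemma k2T1 {x : H} (hx : adjoint T₂ x = 0) : adjoint T₂ (T₁ x) = 0 := by
  have e := pt h.a21' x
  simp only [mul_apply_eq_comp] at e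
  rw [e, hx, map_zero, map_zero]

lemma k2T1pow {x : H} (a : ℕ) (hx : adjoint T₂ x = 0) : adjoint T₂ ((T₁ ^ a) x) = 0 := by
  have e := pt (h.wA2T1 1 a) x
  simp only [mul_apply_eq_comp, pow_one] at e
  rw [e, hx, map_zero, map_zero]

lemma k2A1pow {x : H} (a : ℕ) (hx : adjoint T₂ x = 0) :
    adjoint T₂ (((adjoint T₁) ^ a) x) = 0 := by
  have e := pt (h.wA2A1 1 a) x
  simp only [mul_apply_eq_comp, pow_one] at e
  rw [e, hx, map_zero, map_zero]

lemma k2A1 {x : H} (hx : adjoint T₂ x = 0) : adjoint T₂ (adjoint T₁ x) = 0 := by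
  have := h.k2A1pow 1 hx; simpa using this

lemma k1T2 {x : H} (hx : adjoint T₁ x = 0) : adjoint T₁ (T₂ x) = 0 := h.symm.k2T1 hx
lemma k1T2pow {x : H} (b : ℕ) (hx : adjoint T₁ x = 0) : adjoint T₁ ((T₂ ^ b) x) = 0 :=
  h.symm.k2T1pow b hx
lemma k1A2pow {x : H} (b : ℕ) (hx : adjoint T₁ x = 0) :
    adjoint T₁ (((adjoint T₂) ^ b) x) = 0 := h.symm.k2A1pow b hx
lemma k1A2 {x : H} (hx : adjoint T₁ x = 0) : adjoint T₁ (adjoint T₂ x) = 0 := h.symm.k2A1 hx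

lemma k1Vpow {x : H} (c : ℕ) (hx : adjoint T₁ x = 0) :
    adjoint T₁ (((adjoint U) ^ c) x) = 0 := by
  have e := pt ((h.cVA1.symm.pow_right c).eq) x
  simp only [mul_apply_eq_comp] at e
  rw [e, hx, map_zero]

lemma k2Vpow {x : H} (c : ℕ) (hx : adjoint T₂ x = 0) :
    adjoint T₂ (((adjoint U) ^ c) x) = 0 := by
  have e := pt ((h.cVA2.symm.pow_right c).eq) x
  simp only [mul_apply_eq_comp] at e
  rw [e, hx, map_zero]

lemma k1Upow {x : H} (c : ℕ) (hx : adjoint T₁ x = 0) :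
    adjoint T₁ ((U ^ c) x) = 0 := by
  have e := pt ((h.cA1.pow_left c).symm.eq) x
  simp only [mul_apply_eq_comp] at e
  rw [e, hx, map_zero]

lemma k2Upow {x : H} (c : ℕ) (hx : adjoint T₂ x = 0) :
    adjoint T₂ ((U ^ c) x) = 0 := by
  have e := pt ((h.cA2.pow_left c).symm.eq) x
  simp only [mul_apply_eq_comp] at e
  rw [e, hx, map_zero]

/-- push `U^c` through `T₂^b T₁^a`. -/
lemma Ut21 (c b a : ℕ) (z : H) :
    (U ^ c) ((T₂ ^ b) ((T₁ ^ a) z)) = (T₂ ^ b) ((T₁ ^ a) ((U ^ c) z)) := by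
  have e := pt (((h.c2.pow_right b).mul_right (h.c1.pow_right a)).pow_left c).eq z
  simpa only [mul_apply_eq_comp] using e

lemma Vt12 (c a b : ℕ) (z : H) :
    ((adjoint U) ^ c) ((T₁ ^ a) ((T₂ ^ b) z))
      = (T₁ ^ a) ((T₂ ^ b) (((adjoint U) ^ c) z)) := by
  have e := pt (((h.cV1.pow_right a).mul_right (h.cV2.pow_right b)).pow_left c).eq z
  simpa only [mul_apply_eq_comp] using e

/-- `x = T₁^a (T₂^b y)` can be rewritten as `x = T₂^b (T₁^a y')`. -/
lemma swap_rep (a b : ℕ) (y : H) :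
    (T₁ ^ a) ((T₂ ^ b) y) = (T₂ ^ b) ((T₁ ^ a) ((U ^ (a*b)) y)) := by
  have e := pt (h.w12 a b) y
  simp only [mul_apply_eq_comp] at e
  rw [e, h.Ut21]

lemma Huu_le_symm : Huu T₁ T₂ ≤ Huu T₂ T₁ := by
  intro x hx
  rw [mem_Huu_iff] at hx ⊢
  intro b a
  obtain ⟨y, hy⟩ := hx a b
  exact ⟨(U ^ (a*b)) y, by rw [← h.swap_rep, hy]⟩

lemma Huu_symm : Huu T₁ T₂ = Huu T₂ T₁ := le_antisymm h.Huu_le_symm h.symm.Huu_le_symm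

lemma Hss_le_symm : Hss T₁ T₂ ≤ Hss T₂ T₁ := by
  have hle : (⨆ m : ℕ × ℕ, (LinearMap.ker ((adjoint T₁ : H →L[ℂ] H) : H →ₗ[ℂ] H) ⊓ LinearMap.ker ((adjoint T₂ : H →L[ℂ] H) : H →ₗ[ℂ] H)).map
      (((T₁ ^ m.1) ∘L (T₂ ^ m.2) : H →L[ℂ] H) : H →ₗ[ℂ] H)) ≤ Hss T₂ T₁ := by
    refine iSup_le fun m => ?_
    rintro x ⟨w, ⟨hw1, hw2⟩, rfl⟩
    simp only [ContinuousLinearMap.coe_coe, ContinuousLinearMap.coe_comp', Function.comp_apply]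
    rw [h.swap_rep]
    exact mem_Hss_of m.2 m.1 (h.k2Upow _ hw2) (h.k1Upow _ hw1)
  exact Submodule.topologicalClosure_minimal _ hle (isClosed_Hss T₂ T₁)

lemma Hss_symm : Hss T₁ T₂ = Hss T₂ T₁ := le_antisymm h.Hss_le_symm h.symm.Hss_le_symm

/-- push `T₁ A₁` through `T₂^b`. -/
lemma t1a1_t2pow (b : ℕ) (g : H) :
    T₁ (adjoint T₁ ((T₂ ^ b) g)) = (T₂ ^ b) (T₁ (adjoint T₁ g)) := by
  have e1 := pt (h.wA1T2 1 b) g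
  simp only [mul_apply_eq_comp, pow_one, one_mul] at e1
  rw [e1]
  have e2 := pt ((h.cV1.symm.pow_right b).eq) ((T₂ ^ b) (adjoint T₁ g))
  simp only [mul_apply_eq_comp] at e2
  rw [e2]
  have e3 := pt (h.w12 1 b) (adjoint T₁ g)
  simp only [mul_apply_eq_comp, pow_one, one_mul] at e3
  rw [e3]
  have e4 := pt (pow_iso h.hU1 b) ((T₂ ^ b) (T₁ (adjoint T₁ g)))
  simp only [mul_apply_eq_comp, one_apply_eq_self] at e4
  rw [e4]

/-- If `x` is orthogonal to all four canonical subspaces, then `x = 0`. -/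
lemma ortho_all_eq_zero (x : H)
    (huu : ∀ y ∈ Huu T₁ T₂, ⟪x, y⟫ = 0)
    (hus : ∀ y ∈ Hus T₁ T₂, ⟪x, y⟫ = 0)
    (hsu : ∀ y ∈ Hsu T₁ T₂, ⟪x, y⟫ = 0)
    (hss : ∀ y ∈ Hss T₁ T₂, ⟪x, y⟫ = 0) : x = 0 := by
  have stA : ∀ m, (T₂ ^ m) (((adjoint T₂) ^ m) x) = x := by
    apply wold_key h.h2
    intro m
    set z₀ := ((adjoint T₂) ^ m) x - T₂ (adjoint T₂ (((adjoint T₂) ^ m) x)) with hz₀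
    have hz₀ker : adjoint T₂ z₀ = 0 := by
      rw [hz₀, map_sub, h.a2t2, sub_self]
    have hzrep : ∀ a, (T₁ ^ a) (((adjoint T₁) ^ a) z₀) = z₀ := by
      apply wold_key h.h1
      intro a
      set e := ((adjoint T₁) ^ a) z₀ - T₁ (adjoint T₁ (((adjoint T₁) ^ a) z₀)) with he
      have he1 : adjoint T₁ e = 0 := by rw [he, map_sub, h.a1t1, sub_self]
      have he2 : adjoint T₂ e = 0 := by
        rw [he, map_sub, h.k2A1pow a hz₀ker,
          h.k2T1 (h.k2A1 (h.k2A1pow a hz₀ker)), sub_self]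
      have hv2 : adjoint T₂ ((T₁ ^ a) e) = 0 := h.k2T1pow a he2
      have main : ⟪x, (T₂ ^ m) ((T₁ ^ a) e)⟫ = 0 := by
        have e1 := pt (h.w21 m a) e
        simp only [mul_apply_eq_comp] at e1
        rw [e1, h.Vt12]
        exact hss _ (mem_Hss_of a m (h.k1Vpow _ he1) (h.k2Vpow _ he2))
      calc ⟪z₀, (T₁ ^ a) e⟫
          = ⟪((adjoint T₂) ^ m) x, (T₁ ^ a) e⟫
            - ⟪T₂ (adjoint T₂ (((adjoint T₂) ^ m) x)), (T₁ ^ a) e⟫ := by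
            rw [hz₀, inner_sub_left]
        _ = 0 := by
            have q1 : ⟪T₂ (adjoint T₂ (((adjoint T₂) ^ m) x)), (T₁ ^ a) e⟫ = 0 := by
              rw [← adjoint_inner_right, hv2, inner_zero_right]
            have q2 : ⟪((adjoint T₂) ^ m) x, (T₁ ^ a) e⟫ = 0 := by
              rw [← adjoint_pow', adjoint_inner_left]
              exact main
            rw [q1, q2, sub_zero]
    have hzKK : z₀ ∈ KK T₁ T₂ := by
      rw [mem_KK_iff]
      intro a
      exact ⟨((adjoint T₁) ^ a) z₀, h.k2A1pow a hz₀ker, hzrep a⟩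
    exact hus _ (mem_Hus_of m hzKK)
  have rep : ∀ a b : ℕ, ((adjoint T₁) ^ a) x
      = (T₂ ^ b) (((adjoint U) ^ (a*b)) (((adjoint T₁) ^ a) (((adjoint T₂) ^ b) x))) := by
    intro a b
    conv_lhs => rw [← stA b]
    have e1 := pt (h.wA1T2 a b) (((adjoint T₂) ^ b) x)
    simp only [mul_apply_eq_comp] at e1
    rw [e1]
    have e2 := pt (((h.cV2.pow_left (a*b)).pow_right b).eq)
      (((adjoint T₁) ^ a) (((adjoint T₂) ^ b) x))
    simpa only [mul_apply_eq_comp] using e2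
  have stB : ∀ a, (T₁ ^ a) (((adjoint T₁) ^ a) x) = x := by
    apply wold_key h.h1
    intro a
    set f := ((adjoint T₁) ^ a) x - T₁ (adjoint T₁ (((adjoint T₁) ^ a) x)) with hf
    have hfK : f ∈ KK T₂ T₁ := by
      rw [mem_KK_iff]
      intro b
      set g := ((adjoint U) ^ (a*b)) (((adjoint T₁) ^ a) (((adjoint T₂) ^ b) x)) with hgdef
      refine ⟨g - T₁ (adjoint T₁ g), ?_, ?_⟩
      · rw [map_sub, h.a1t1, sub_self]
      · rw [map_sub, hf, rep a b, h.t1a1_t2pow]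
    exact hsu _ (mem_Hsu_of a hfK)
  have hxuu : x ∈ Huu T₁ T₂ := by
    rw [mem_Huu_iff]
    intro a b
    refine ⟨((adjoint U) ^ (a*b)) (((adjoint T₁) ^ a) (((adjoint T₂) ^ b) x)), ?_⟩
    rw [← rep a b, stB a]
  exact inner_self_eq_zero.mp (huu x hxuu)

/-- generator orthogonality `Huu ⟂ T₂^m (KK)`. -/
lemma guu_us (x : H) (hx : x ∈ Huu T₁ T₂) (m : ℕ) {s : H} (hs : s ∈ KK T₁ T₂) :
    ⟪x, (T₂ ^ m) s⟫ = 0 := by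
  obtain ⟨y, hy⟩ := mem_Huu_iff.1 hx 0 (m + 1)
  rw [pow_zero, ContinuousLinearMap.one_apply] at hy
  rw [← hy, pow_split m 1, pow_one, iso_pow_inner h.h2,
    ← adjoint_inner_right, KK_ker hs, inner_zero_right]

lemma ortho_uu_us : Huu T₁ T₂ ⟂ Hus T₁ T₂ := by
  rw [Hus_eq]
  refine ortho_closure_right (Submodule.isOrtho_iSup_right.2 fun m => ?_)
  refine isOrtho_of_forall ?_
  rintro x hx y ⟨s, hs, rfl⟩
  exact h.guu_us x hx m hs

lemma ortho_uu_su : Huu T₁ T₂ ⟂ Hsu T₁ T₂ := by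
  rw [Hsu_eq_Hus, h.Huu_symm]
  exact h.symm.ortho_uu_us

lemma guu_ss (x : H) (hx : x ∈ Huu T₁ T₂) (a b : ℕ) {w : H}
    (hw2 : adjoint T₂ w = 0) : ⟪x, (T₁ ^ a) ((T₂ ^ b) w)⟫ = 0 := by
  obtain ⟨y, hy⟩ := mem_Huu_iff.1 hx a (b + 1)
  rw [← hy, iso_pow_inner h.h1, pow_split b 1, pow_one, iso_pow_inner h.h2,
    ← adjoint_inner_right, hw2, inner_zero_right]

lemma ortho_uu_ss : Huu T₁ T₂ ⟂ Hss T₁ T₂ := by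
  rw [Hss]
  refine ortho_closure_right (Submodule.isOrtho_iSup_right.2 fun m => ?_)
  refine isOrtho_of_forall ?_
  rintro x hx y ⟨w, ⟨hw1, hw2⟩, rfl⟩
  simp only [ContinuousLinearMap.coe_coe, ContinuousLinearMap.coe_comp', Function.comp_apply]
  exact h.guu_ss x hx m.1 m.2 hw2

lemma gus_su (m : ℕ) {s : H} (hs : s ∈ KK T₁ T₂) (n : ℕ) {t : H} (ht : t ∈ KK T₂ T₁) :
    ⟪(T₂ ^ m) s, (T₁ ^ n) t⟫ = 0 := by
  obtain ⟨u, hu1, hu2⟩ := mem_KK_iff.1 ht m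
  obtain ⟨k, hk1, hk2⟩ := mem_KK_iff.1 hs (n + 1)
  have e0 : ((adjoint T₂) ^ m) t = u := by rw [← hu2, apow_tpow h.h2]
  rw [← adjoint_inner_right, adjoint_pow']
  have e2 := pt (h.wA2T1 m n) t
  simp only [mul_apply_eq_comp] at e2
  rw [e2, e0, ← adjoint_inner_left (U ^ (m * n)), adjoint_pow']
  have e3 := pt (((h.cV1.pow_left (m*n)).pow_right (n+1)).eq) k
  simp only [mul_apply_eq_comp] at e3
  rw [← hk2, e3, pow_split n 1, pow_one, iso_pow_inner h.h1,
    ← adjoint_inner_right, hu1, inner_zero_right]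

lemma ortho_us_su : Hus T₁ T₂ ⟂ Hsu T₁ T₂ := by
  rw [Hus_eq, Hsu_eq]
  refine ortho_closure_both ?_
  refine Submodule.isOrtho_iSup_left.2 fun m => Submodule.isOrtho_iSup_right.2 fun n => ?_
  refine isOrtho_of_forall ?_
  rintro x ⟨s, hs, rfl⟩ y ⟨t, ht, rfl⟩
  exact h.gus_su m hs n ht

lemma gus_ss (m : ℕ) {s : H} (hs : s ∈ KK T₁ T₂) (a b : ℕ) {w : H}
    (hw1 : adjoint T₁ w = 0) (hw2 : adjoint T₂ w = 0) :
    ⟪(T₂ ^ m) s, (T₁ ^ a) ((T₂ ^ b) w)⟫ = 0 := by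
  have e1 := pt (h.w12 a b) w
  simp only [mul_apply_eq_comp] at e1
  rw [e1, ← adjoint_inner_left (U ^ (a * b)), adjoint_pow']
  have e2 := pt (((h.cV2.pow_left (a*b)).pow_right m).eq) s
  simp only [mul_apply_eq_comp] at e2
  rw [e2]
  rcases lt_trichotomy m b with hlt | heq | hgt
  · obtain ⟨d, rfl⟩ : ∃ d, b = m + (d+1) := ⟨b - m - 1, by omega⟩
    rw [pow_split m (d+1), iso_pow_inner h.h2, add_comm d 1, pow_split 1 d, pow_one,
      ← adjoint_inner_left T₂, h.k2Vpow _ (KK_ker hs), inner_zero_left]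
  · rw [heq, iso_pow_inner h.h2]
    obtain ⟨k, hk1, hk2⟩ := mem_KK_iff.1 hs (a+1)
    have e3 := pt (((h.cV1.pow_left (a*b)).pow_right (a+1)).eq) k
    simp only [mul_apply_eq_comp] at e3
    rw [← hk2, e3, pow_split a 1, pow_one, iso_pow_inner h.h1,
      ← adjoint_inner_right, hw1, inner_zero_right]
  · obtain ⟨d, rfl⟩ : ∃ d, m = b + (d+1) := ⟨m - b - 1, by omega⟩
    rw [pow_split b (d+1), iso_pow_inner h.h2, add_comm d 1, pow_split 1 d, pow_one,
      ← adjoint_inner_right, h.k2T1pow a hw2, inner_zero_right]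

lemma ortho_us_ss : Hus T₁ T₂ ⟂ Hss T₁ T₂ := by
  rw [Hus_eq, Hss]
  refine ortho_closure_both ?_
  refine Submodule.isOrtho_iSup_left.2 fun m => Submodule.isOrtho_iSup_right.2 fun n => ?_
  refine isOrtho_of_forall ?_
  rintro x ⟨s, hs, rfl⟩ y ⟨w, ⟨hw1, hw2⟩, rfl⟩
  simp only [ContinuousLinearMap.coe_coe, ContinuousLinearMap.coe_comp', Function.comp_apply]
  exact h.gus_ss m hs n.1 n.2 hw1 hw2

lemma ortho_su_ss : Hsu T₁ T₂ ⟂ Hss T₁ T₂ := by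
  rw [Hsu_eq_Hus, h.Hss_symm]
  exact h.symm.ortho_us_ss

lemma Ut12 (c a b : ℕ) (z : H) :
    (U ^ c) ((T₁ ^ a) ((T₂ ^ b) z)) = (T₁ ^ a) ((T₂ ^ b) ((U ^ c) z)) := by
  have e := pt (((h.c1.pow_right a).mul_right (h.c2.pow_right b)).pow_left c).eq z
  simpa only [mul_apply_eq_comp] using e

lemma KK_T1 {s : H} (hs : s ∈ KK T₁ T₂) : T₁ s ∈ KK T₁ T₂ := by
  rw [mem_KK_iff] at hs ⊢
  intro a
  obtain ⟨k, hk1, hk2⟩ := hs a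
  exact ⟨T₁ k, h.k2T1 hk1, by rw [← hk2, ← pow_succ_apply, pow_succ_apply']⟩

lemma KK_A1 {s : H} (hs : s ∈ KK T₁ T₂) : adjoint T₁ s ∈ KK T₁ T₂ := by
  rw [mem_KK_iff] at hs ⊢
  intro a
  obtain ⟨k, hk1, hk2⟩ := hs (a+1)
  exact ⟨k, hk1, by rw [← hk2, pow_succ_apply', h.a1t1]⟩

lemma KK_U {s : H} (c : ℕ) (hs : s ∈ KK T₁ T₂) : (U ^ c) s ∈ KK T₁ T₂ := by
  rw [mem_KK_iff] at hs ⊢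
  intro a
  obtain ⟨k, hk1, hk2⟩ := hs a
  exact ⟨(U ^ c) k, h.k2Upow c hk1, by rw [← hk2, cpow h.c1 c a]⟩

lemma KK_V {s : H} (c : ℕ) (hs : s ∈ KK T₁ T₂) : ((adjoint U) ^ c) s ∈ KK T₁ T₂ := by
  rw [mem_KK_iff] at hs ⊢
  intro a
  obtain ⟨k, hk1, hk2⟩ := hs a
  exact ⟨((adjoint U) ^ c) k, h.k2Vpow c hk1, by rw [← hk2, cpow h.cV1 c a]⟩

lemma t1_t2pow (m : ℕ) (z : H) : T₁ ((T₂ ^ m) z) = (T₂ ^ m) ((U ^ m) (T₁ z)) := by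
  have e := pt (h.w12 1 m) z
  simp only [mul_apply_eq_comp, pow_one, one_mul] at e
  rw [e, cpow h.c2 m m]

lemma a1_t2pow (m : ℕ) (z : H) :
    adjoint T₁ ((T₂ ^ m) z) = (T₂ ^ m) (((adjoint U) ^ m) (adjoint T₁ z)) := by
  have e := pt (h.wA1T2 1 m) z
  simp only [mul_apply_eq_comp, pow_one, one_mul] at e
  rw [e, cpow h.cV2 m m]

lemma t2_t1pow (a : ℕ) (z : H) : T₂ ((T₁ ^ a) z) = (T₁ ^ a) (((adjoint U) ^ a) (T₂ z)) := by
  have e := pt (h.w21 1 a) z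
  simp only [mul_apply_eq_comp, pow_one, one_mul] at e
  rw [e, cpow h.cV1 a a]

lemma a2_t1pow (a : ℕ) (z : H) :
    adjoint T₂ ((T₁ ^ a) z) = (T₁ ^ a) ((U ^ a) (adjoint T₂ z)) := by
  have e := pt (h.wA2T1 1 a) z
  simp only [mul_apply_eq_comp, pow_one, one_mul] at e
  rw [e, cpow h.c1 a a]

lemma Huu_T1 {x : H} (hx : x ∈ Huu T₁ T₂) : T₁ x ∈ Huu T₁ T₂ := by
  rw [mem_Huu_iff] at hx ⊢
  intro a b
  obtain ⟨y, hy⟩ := hx a b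
  refine ⟨(U ^ b) (T₁ y), ?_⟩
  rw [← h.t1_t2pow, ← self_swap, hy]

lemma Huu_A1 {x : H} (hx : x ∈ Huu T₁ T₂) : adjoint T₁ x ∈ Huu T₁ T₂ := by
  rw [mem_Huu_iff] at hx ⊢
  intro a b
  obtain ⟨y, hy⟩ := hx (a+1) b
  exact ⟨y, by rw [← hy, pow_succ_apply', h.a1t1]⟩

lemma Huu_T2 {x : H} (hx : x ∈ Huu T₁ T₂) : T₂ x ∈ Huu T₁ T₂ := by
  rw [h.Huu_symm] at hx ⊢
  exact h.symm.Huu_T1 hx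

lemma Huu_A2 {x : H} (hx : x ∈ Huu T₁ T₂) : adjoint T₂ x ∈ Huu T₁ T₂ := by
  rw [h.Huu_symm] at hx ⊢
  exact h.symm.Huu_A1 hx

lemma Hus_T1 {x : H} (hx : x ∈ Hus T₁ T₂) : T₁ x ∈ Hus T₁ T₂ := by
  rw [Hus_eq] at hx ⊢
  refine closure_invariant ?_ x hx
  refine le_trans (le_of_eq (Submodule.map_iSup _ _)) (iSup_le fun m => ?_)
  rintro _ ⟨_, ⟨s, hs, rfl⟩, rfl⟩
  simp only [ContinuousLinearMap.coe_coe]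
  rw [h.t1_t2pow]
  exact mem_Hus_of m (h.KK_U m (h.KK_T1 hs))

lemma Hus_A1 {x : H} (hx : x ∈ Hus T₁ T₂) : adjoint T₁ x ∈ Hus T₁ T₂ := by
  rw [Hus_eq] at hx ⊢
  refine closure_invariant ?_ x hx
  refine le_trans (le_of_eq (Submodule.map_iSup _ _)) (iSup_le fun m => ?_)
  rintro _ ⟨_, ⟨s, hs, rfl⟩, rfl⟩
  simp only [ContinuousLinearMap.coe_coe]
  rw [h.a1_t2pow]
  exact mem_Hus_of m (h.KK_V m (h.KK_A1 hs))

lemma Hus_T2 {x : H} (hx : x ∈ Hus T₁ T₂) : T₂ x ∈ Hus T₁ T₂ := by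
  rw [Hus_eq] at hx ⊢
  refine closure_invariant ?_ x hx
  refine le_trans (le_of_eq (Submodule.map_iSup _ _)) (iSup_le fun m => ?_)
  rintro _ ⟨_, ⟨s, hs, rfl⟩, rfl⟩
  simp only [ContinuousLinearMap.coe_coe]
  rw [← pow_succ_apply']
  exact mem_Hus_of (m+1) hs

lemma Hus_A2 {x : H} (hx : x ∈ Hus T₁ T₂) : adjoint T₂ x ∈ Hus T₁ T₂ := by
  rw [Hus_eq] at hx ⊢
  refine closure_invariant ?_ x hx
  refine le_trans (le_of_eq (Submodule.map_iSup _ _)) (iSup_le fun m => ?_)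
  rintro _ ⟨_, ⟨s, hs, rfl⟩, rfl⟩
  simp only [ContinuousLinearMap.coe_coe]
  cases m with
  | zero =>
    rw [pow_zero, ContinuousLinearMap.one_apply, KK_ker hs]
    exact Submodule.zero_mem _
  | succ m =>
    rw [pow_succ_apply', h.a2t2]
    exact mem_Hus_of m hs

lemma Hsu_T1 {x : H} (hx : x ∈ Hsu T₁ T₂) : T₁ x ∈ Hsu T₁ T₂ := by
  rw [Hsu_eq_Hus] at hx ⊢; exact h.symm.Hus_T2 hx

lemma Hsu_A1 {x : H} (hx : x ∈ Hsu T₁ T₂) : adjoint T₁ x ∈ Hsu T₁ T₂ := by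
  rw [Hsu_eq_Hus] at hx ⊢; exact h.symm.Hus_A2 hx

lemma Hsu_T2 {x : H} (hx : x ∈ Hsu T₁ T₂) : T₂ x ∈ Hsu T₁ T₂ := by
  rw [Hsu_eq_Hus] at hx ⊢; exact h.symm.Hus_T1 hx

lemma Hsu_A2 {x : H} (hx : x ∈ Hsu T₁ T₂) : adjoint T₂ x ∈ Hsu T₁ T₂ := by
  rw [Hsu_eq_Hus] at hx ⊢; exact h.symm.Hus_A1 hx

lemma Hss_T1 {x : H} (hx : x ∈ Hss T₁ T₂) : T₁ x ∈ Hss T₁ T₂ := by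
  rw [Hss] at hx ⊢
  refine closure_invariant ?_ x hx
  refine le_trans (le_of_eq (Submodule.map_iSup _ _)) (iSup_le fun m => ?_)
  rintro _ ⟨_, ⟨w, ⟨hw1, hw2⟩, rfl⟩, rfl⟩
  simp only [ContinuousLinearMap.coe_coe, ContinuousLinearMap.coe_comp', Function.comp_apply]
  rw [self_swap, ← pow_succ_apply]
  exact mem_Hss_of (m.1+1) m.2 hw1 hw2

lemma Hss_A1 {x : H} (hx : x ∈ Hss T₁ T₂) : adjoint T₁ x ∈ Hss T₁ T₂ := by
  rw [Hss] at hx ⊢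
  refine closure_invariant ?_ x hx
  refine le_trans (le_of_eq (Submodule.map_iSup _ _)) (iSup_le fun m => ?_)
  rintro _ ⟨_, ⟨w, ⟨hw1, hw2⟩, rfl⟩, rfl⟩
  simp only [ContinuousLinearMap.coe_coe, ContinuousLinearMap.coe_comp', Function.comp_apply]
  obtain ⟨a, b⟩ := m
  cases a with
  | zero =>
    rw [pow_zero, ContinuousLinearMap.one_apply, h.a1_t2pow, (id hw1 : adjoint T₁ w = 0), map_zero, map_zero]
    exact Submodule.zero_mem _
  | succ a =>
    rw [pow_succ_apply', h.a1t1]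
    exact mem_Hss_of a b hw1 hw2

lemma Hss_T2 {x : H} (hx : x ∈ Hss T₁ T₂) : T₂ x ∈ Hss T₁ T₂ := by
  rw [h.Hss_symm] at hx ⊢; exact h.symm.Hss_T1 hx

lemma Hss_A2 {x : H} (hx : x ∈ Hss T₁ T₂) : adjoint T₂ x ∈ Hss T₁ T₂ := by
  rw [h.Hss_symm] at hx ⊢; exact h.symm.Hss_A1 hx

omit h

lemma isClosed_range_iso {f : H →L[ℂ] H} (hf : ∀ x y : H, ⟪f x, f y⟫ = ⟪x, y⟫) :
    IsClosed ((LinearMap.range (f : H →ₗ[ℂ] H) : Submodule ℂ H) : Set H) := by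
  have hcl : IsClosed (Set.range ⇑((f : H →ₗ[ℂ] H).isometryOfInner hf)) :=
    ((f : H →ₗ[ℂ] H).isometryOfInner hf).isometry.isClosedEmbedding.isClosed_range
  rw [LinearMap.coe_isometryOfInner, ContinuousLinearMap.coe_coe] at hcl
  have : ((LinearMap.range (f : H →ₗ[ℂ] H) : Submodule ℂ H) : Set H) = Set.range ⇑f := by
    ext z; simp [LinearMap.mem_range, Set.mem_range]
  rw [this]
  exact hcl

include h

lemma isClosed_Huu : IsClosed ((Huu T₁ T₂ : Submodule ℂ H) : Set H) := by
  rw [Huu]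
  rw [Submodule.coe_iInf]
  refine isClosed_iInter fun m => ?_
  refine isClosed_range_iso fun x y => ?_
  simp only [ContinuousLinearMap.coe_coe, ContinuousLinearMap.coe_comp', Function.comp_apply]
  rw [iso_pow_inner h.h1, iso_pow_inner h.h2]

/-- `U^n (V^n z) = z`. -/
lemma UVpow (n : ℕ) (z : H) : (U ^ n) (((adjoint U) ^ n) z) = z := by
  have h' : adjoint (adjoint U) * adjoint U = 1 := by rw [adjoint_adjoint]; exact h.hU2
  have := pt (pow_iso h' n) z
  simpa only [mul_apply_eq_comp, one_apply_eq_self, adjoint_adjoint] using this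

lemma Huu_map_T1 : (Huu T₁ T₂).map (T₁ : H →ₗ[ℂ] H) = Huu T₁ T₂ := by
  refine le_antisymm ?_ ?_
  · rintro _ ⟨x, hx, rfl⟩; exact h.Huu_T1 hx
  · intro x hx
    refine ⟨adjoint T₁ x, h.Huu_A1 hx, ?_⟩
    obtain ⟨y, hy⟩ := mem_Huu_iff.1 hx 1 0
    simp only [pow_one, pow_zero, ContinuousLinearMap.one_apply] at hy
    rw [← hy, h.a1t1]; rfl

lemma Huu_map_T2 : (Huu T₁ T₂).map (T₂ : H →ₗ[ℂ] H) = Huu T₁ T₂ := by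
  rw [h.Huu_symm]; exact h.symm.Huu_map_T1

/-- every element of `Hus` is in the range of `T₁`. -/
lemma Hus_range_T1 : ∀ x ∈ Hus T₁ T₂, T₁ (adjoint T₁ x) = x := by
  have key : Hus T₁ T₂ ≤ LinearMap.ker ((1 - T₁ ∘L adjoint T₁ : H →L[ℂ] H) : H →ₗ[ℂ] H) := by
    rw [Hus_eq]
    refine Submodule.topologicalClosure_minimal _ (iSup_le fun m => ?_)
      (ContinuousLinearMap.isClosed_ker _)
    rintro _ ⟨s, hs, rfl⟩
    obtain ⟨k, hk1, hk2⟩ := mem_KK_iff.1 hs 1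
    rw [pow_one] at hk2
    have e1 : T₁ (adjoint T₁ s) = s := by rw [← hk2, h.a1t1]
    have e2 : T₁ (adjoint T₁ ((T₂ ^ m) s)) = (T₂ ^ m) s := by
      rw [h.a1_t2pow, h.t1_t2pow]
      have e3 : T₁ (((adjoint U) ^ m) (adjoint T₁ s)) = ((adjoint U) ^ m) (T₁ (adjoint T₁ s)) := by
        have e4 := cpow h.cV1 m 1 (adjoint T₁ s)
        simpa only [pow_one] using e4.symm
      rw [e3, e1, h.UVpow]
    rw [LinearMap.mem_ker]
    show (T₂ ^ m) s - T₁ (adjoint T₁ ((T₂ ^ m) s)) = 0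
    rw [e2, sub_self]
  intro x hx
  have hk := key hx
  rw [LinearMap.mem_ker] at hk
  have hk' : x - T₁ (adjoint T₁ x) = 0 := hk
  exact (sub_eq_zero.mp hk').symm

lemma Hus_map_T1 : (Hus T₁ T₂).map (T₁ : H →ₗ[ℂ] H) = Hus T₁ T₂ := by
  refine le_antisymm ?_ ?_
  · rintro _ ⟨x, hx, rfl⟩; exact h.Hus_T1 hx
  · intro x hx; exact ⟨adjoint T₁ x, h.Hus_A1 hx, h.Hus_range_T1 x hx⟩

lemma Hsu_map_T2 : (Hsu T₁ T₂).map (T₂ : H →ₗ[ℂ] H) = Hsu T₁ T₂ := by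
  rw [Hsu_eq_Hus]; exact h.symm.Hus_map_T1

lemma Hus_shift : (⨅ n : ℕ, (Hus T₁ T₂).map (((T₂ ^ n) : H →L[ℂ] H) : H →ₗ[ℂ] H)) = ⊥ := by
  rw [eq_bot_iff]
  intro x hx
  simp only [Submodule.mem_iInf] at hx
  have hx0 : x ∈ Hus T₁ T₂ := by
    obtain ⟨y, hy, hyx⟩ := hx 0
    rw [ContinuousLinearMap.coe_coe, pow_zero, ContinuousLinearMap.one_apply] at hyx
    rwa [← hyx]
  have hperp : (⨆ m : ℕ, (KK T₁ T₂).map (((T₂ ^ m) : H →L[ℂ] H) : H →ₗ[ℂ] H)) ≤ (ℂ ∙ x)ᗮ := by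
    refine iSup_le fun m => ?_
    rintro _ ⟨s, hs, rfl⟩
    rw [Submodule.mem_orthogonal_singleton_iff_inner_right]
    obtain ⟨v, hv, hvx⟩ := hx (m+1)
    simp only [ContinuousLinearMap.coe_coe] at hvx ⊢
    rw [← hvx, pow_split m 1, pow_one, iso_pow_inner h.h2,
      ← adjoint_inner_right, KK_ker hs, inner_zero_right]
  have hOS : (ℂ ∙ x) ⟂ (⨆ m : ℕ, (KK T₁ T₂).map (((T₂ ^ m) : H →L[ℂ] H) : H →ₗ[ℂ] H)).topologicalClosure :=
    ortho_closure_right (Submodule.IsOrtho.symm hperp)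
  rw [Hus_eq] at hx0
  rw [Submodule.mem_bot]
  exact inner_self_eq_zero.mp (hOS.inner_eq (Submodule.mem_span_singleton_self x) hx0)

lemma Hsu_shift : (⨅ n : ℕ, (Hsu T₁ T₂).map (((T₁ ^ n) : H →L[ℂ] H) : H →ₗ[ℂ] H)) = ⊥ := by
  rw [Hsu_eq_Hus]; exact h.symm.Hus_shift

lemma Hss_shift2 : (⨅ n : ℕ, (Hss T₁ T₂).map (((T₂ ^ n) : H →L[ℂ] H) : H →ₗ[ℂ] H)) = ⊥ := by
  rw [eq_bot_iff]
  intro x hx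
  simp only [Submodule.mem_iInf] at hx
  have hx0 : x ∈ Hss T₁ T₂ := by
    obtain ⟨y, hy, hyx⟩ := hx 0
    rw [ContinuousLinearMap.coe_coe, pow_zero, ContinuousLinearMap.one_apply] at hyx
    rwa [← hyx]
  have hperp : (⨆ m : ℕ × ℕ, (LinearMap.ker ((adjoint T₁ : H →L[ℂ] H) : H →ₗ[ℂ] H) ⊓ LinearMap.ker ((adjoint T₂ : H →L[ℂ] H) : H →ₗ[ℂ] H)).map
      (((T₁ ^ m.1) ∘L (T₂ ^ m.2) : H →L[ℂ] H) : H →ₗ[ℂ] H)) ≤ (ℂ ∙ x)ᗮ := by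
    refine iSup_le fun m => ?_
    rintro _ ⟨w, ⟨hw1, hw2⟩, rfl⟩
    obtain ⟨a, b⟩ := m
    simp only [ContinuousLinearMap.coe_coe, ContinuousLinearMap.coe_comp', Function.comp_apply]
    rw [Submodule.mem_orthogonal_singleton_iff_inner_right]
    obtain ⟨v, hv, hvx⟩ := hx (b+1)
    simp only [ContinuousLinearMap.coe_coe] at hvx ⊢
    rw [← hvx, ← adjoint_inner_left (T₁ ^ a), adjoint_pow']
    have e1 := pt (h.wA1T2 a (b+1)) v
    simp only [mul_apply_eq_comp] at e1
    rw [e1, ← adjoint_pow' U, adjoint_inner_left, cpow h.c2 (a*(b+1)) b w,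
      pow_split b 1, pow_one, iso_pow_inner h.h2, ← adjoint_inner_right,
      h.k2Upow _ hw2, inner_zero_right]
  have hOS : (ℂ ∙ x) ⟂ (⨆ m : ℕ × ℕ, (LinearMap.ker ((adjoint T₁ : H →L[ℂ] H) : H →ₗ[ℂ] H) ⊓ LinearMap.ker ((adjoint T₂ : H →L[ℂ] H) : H →ₗ[ℂ] H)).map
      (((T₁ ^ m.1) ∘L (T₂ ^ m.2) : H →L[ℂ] H) : H →ₗ[ℂ] H)).topologicalClosure :=
    ortho_closure_right (Submodule.IsOrtho.symm hperp)
  rw [Hss] at hx0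
  rw [Submodule.mem_bot]
  exact inner_self_eq_zero.mp (hOS.inner_eq (Submodule.mem_span_singleton_self x) hx0)

lemma Hss_shift1 : (⨅ n : ℕ, (Hss T₁ T₂).map (((T₁ ^ n) : H →L[ℂ] H) : H →ₗ[ℂ] H)) = ⊥ := by
  rw [h.Hss_symm]; exact h.symm.Hss_shift2

omit h

lemma decomp (M : Submodule ℂ H) (hM : IsClosed (M : Set H)) (x : H) :
    ∃ y ∈ M, ∃ z ∈ Mᗮ, x = y + z := by
  haveI : CompleteSpace M := hM.completeSpace_coe
  exact M.exists_add_mem_mem_orthogonal x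

include h

lemma sup_top : Huu T₁ T₂ ⊔ Hus T₁ T₂ ⊔ Hsu T₁ T₂ ⊔ Hss T₁ T₂ = ⊤ := by
  rw [eq_top_iff]
  intro x _
  obtain ⟨u1, hu1, z1, hz1, hx1⟩ := decomp _ h.isClosed_Huu x
  obtain ⟨u2, hu2, z2, hz2, hx2⟩ := decomp _ (isClosed_Hus T₁ T₂) z1
  obtain ⟨u3, hu3, z3, hz3, hx3⟩ := decomp _ (isClosed_Hsu T₁ T₂) z2
  obtain ⟨u4, hu4, z4, hz4, hx4⟩ := decomp _ (isClosed_Hss T₁ T₂) z3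
  have q1 : ∀ y ∈ Huu T₁ T₂, ⟪z4, y⟫ = 0 := by
    intro y hy
    have hz4e : z4 = z1 - u2 - u3 - u4 := by rw [hx2, hx3, hx4]; abel
    rw [hz4e, sub_sub, sub_sub, inner_sub_left,
      Submodule.inner_left_of_mem_orthogonal hy hz1, inner_add_left, inner_add_left,
      (h.ortho_uu_us.symm.inner_eq hu2 hy : ⟪u2, y⟫ = 0),
      (h.ortho_uu_su.symm.inner_eq hu3 hy : ⟪u3, y⟫ = 0),
      (h.ortho_uu_ss.symm.inner_eq hu4 hy : ⟪u4, y⟫ = 0)]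
    ring
  have q2 : ∀ y ∈ Hus T₁ T₂, ⟪z4, y⟫ = 0 := by
    intro y hy
    have hz4e : z4 = z2 - u3 - u4 := by rw [hx3, hx4]; abel
    rw [hz4e, sub_sub, inner_sub_left,
      Submodule.inner_left_of_mem_orthogonal hy hz2, inner_add_left,
      (h.ortho_us_su.symm.inner_eq hu3 hy : ⟪u3, y⟫ = 0),
      (h.ortho_us_ss.symm.inner_eq hu4 hy : ⟪u4, y⟫ = 0)]
    ring
  have q3 : ∀ y ∈ Hsu T₁ T₂, ⟪z4, y⟫ = 0 := by
    intro y hy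
    have hz4e : z4 = z3 - u4 := by rw [hx4]; abel
    rw [hz4e, inner_sub_left,
      Submodule.inner_left_of_mem_orthogonal hy hz3,
      (h.ortho_su_ss.symm.inner_eq hu4 hy : ⟪u4, y⟫ = 0)]
    ring
  have q4 : ∀ y ∈ Hss T₁ T₂, ⟪z4, y⟫ = 0 := fun y hy =>
    Submodule.inner_left_of_mem_orthogonal hy hz4
  have hz40 : z4 = 0 := h.ortho_all_eq_zero z4 q1 q2 q3 q4
  have hxsum : x = u1 + u2 + u3 + u4 := by rw [hx1, hx2, hx3, hx4, hz40]; abel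
  rw [hxsum]
  refine Submodule.add_mem _ (Submodule.add_mem _ (Submodule.add_mem _ ?_ ?_) ?_) ?_
  · exact Submodule.mem_sup_left (Submodule.mem_sup_left (Submodule.mem_sup_left hu1))
  · exact Submodule.mem_sup_left (Submodule.mem_sup_left (Submodule.mem_sup_right hu2))
  · exact Submodule.mem_sup_left (Submodule.mem_sup_right hu3)
  · exact Submodule.mem_sup_right hu4

omit h

lemma powmem {T : H →L[ℂ] H} {K : Submodule ℂ H} (hKT : ∀ x ∈ K, T x ∈ K) (a : ℕ) :
    ∀ x ∈ K, (T ^ a) x ∈ K := by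
  induction a with
  | zero => intro x hx; rwa [pow_zero, ContinuousLinearMap.one_apply]
  | succ a ih => intro x hx; rw [pow_succ_apply']; exact hKT _ (ih x hx)

lemma map_pow_self {T : H →L[ℂ] H} {K : Submodule ℂ H} (hK : K.map (T : H →ₗ[ℂ] H) = K) (a : ℕ) :
    ∀ x ∈ K, ∃ y ∈ K, (T ^ a) y = x := by
  induction a with
  | zero => intro x hx; exact ⟨x, hx, by rw [pow_zero, ContinuousLinearMap.one_apply]⟩
  | succ a ih =>
    intro x hx
    obtain ⟨y, hy, hyx⟩ := ih x hx
    have : y ∈ K.map (T : H →ₗ[ℂ] H) := by rw [hK]; exact hy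
    obtain ⟨y', hy', hy'y⟩ := this
    simp only [ContinuousLinearMap.coe_coe] at hy'y
    exact ⟨y', hy', by rw [pow_succ_apply, hy'y, hyx]⟩

/-- relative Wold: a pure shift part is spanned by its wandering subspace. -/
lemma shift_le {T : H →L[ℂ] H} (hT : adjoint T * T = 1) {M : Submodule ℂ H}
    (hMc : IsClosed (M : Set H)) (hMT : ∀ x ∈ M, T x ∈ M) (hMA : ∀ x ∈ M, adjoint T x ∈ M)
    (hsh : (⨅ n : ℕ, M.map (((T ^ n) : H →L[ℂ] H) : H →ₗ[ℂ] H)) = ⊥) :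
    M ≤ (⨆ m : ℕ, (M ⊓ LinearMap.ker ((adjoint T : H →L[ℂ] H) : H →ₗ[ℂ] H)).map (((T ^ m) : H →L[ℂ] H) : H →ₗ[ℂ] H)).topologicalClosure := by
  intro x hx
  set S := ⨆ m : ℕ, (M ⊓ LinearMap.ker ((adjoint T : H →L[ℂ] H) : H →ₗ[ℂ] H)).map (((T ^ m) : H →L[ℂ] H) : H →ₗ[ℂ] H) with hS
  have hSM : S ≤ M := iSup_le fun m => by
    rintro _ ⟨s, hsm, rfl⟩
    exact powmem hMT m s (Submodule.mem_inf.1 hsm).1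
  have hNM : S.topologicalClosure ≤ M := Submodule.topologicalClosure_minimal _ hSM hMc
  obtain ⟨u, hu, z, hz, hxz⟩ :=
    decomp S.topologicalClosure (Submodule.isClosed_topologicalClosure _) x
  have hzM : z ∈ M := by
    have hzd : z = x - u := by rw [hxz]; abel
    rw [hzd]; exact Submodule.sub_mem _ hx (hNM hu)
  have hrep : ∀ n, (T ^ n) (((adjoint T) ^ n) z) = z := by
    apply wold_key hT
    intro m
    set d := ((adjoint T) ^ m) z - T (adjoint T (((adjoint T) ^ m) z)) with hd
    have h1 : ((adjoint T) ^ m) z ∈ M := powmem hMA m z hzM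
    have hdM : d ∈ M := Submodule.sub_mem _ h1 (hMT _ (hMA _ h1))
    have hdk : adjoint T d = 0 := by
      rw [hd, map_sub, ← mul_apply_eq_comp (adjoint T) T, hT, one_apply_eq_self, sub_self]
    have hdS : (T ^ m) d ∈ S.topologicalClosure :=
      Submodule.le_topologicalClosure _
        (Submodule.mem_iSup_of_mem m ⟨d, Submodule.mem_inf.2 ⟨hdM, LinearMap.mem_ker.2 hdk⟩, rfl⟩)
    exact Submodule.inner_left_of_mem_orthogonal hdS hz
  have hz0 : z = 0 := by
    have hzi : z ∈ (⨅ n : ℕ, M.map (((T ^ n) : H →L[ℂ] H) : H →ₗ[ℂ] H)) := by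
      rw [Submodule.mem_iInf]
      intro n
      exact ⟨((adjoint T) ^ n) z, powmem hMA n z hzM, hrep n⟩
    rw [hsh, Submodule.mem_bot] at hzi
    exact hzi
  rw [hxz, hz0, add_zero]
  exact hu

lemma compl_of_sup {P Q : Submodule ℂ H} (hsup : P ⊔ Q = ⊤) (hPQ : P ⟂ Q) : Qᗮ = P := by
  refine le_antisymm ?_ hPQ.le
  intro x hx
  have hxtop : x ∈ P ⊔ Q := by rw [hsup]; trivial
  obtain ⟨p, hp, q, hq, hpq⟩ := Submodule.mem_sup.1 hxtop
  have hq0 : q = 0 := by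
    have e1 : ⟪q, p + q⟫ = 0 := by
      rw [hpq]
      exact Submodule.inner_right_of_mem_orthogonal hq hx
    have e2 : ⟪q, p⟫ = 0 := (hPQ.symm.inner_eq hq hp : _)
    rw [inner_add_right, e2, zero_add] at e1
    exact inner_self_eq_zero.mp e1
  rw [← hpq, hq0, add_zero]
  exact hp

lemma sandwich {A B C D M : Submodule ℂ H} (hsup : A ⊔ B ⊔ C ⊔ D = ⊤)
    (hA : A ≤ M)
    (hB : ∀ y ∈ B, ∀ x ∈ M, ⟪y, x⟫ = 0)
    (hC : ∀ y ∈ C, ∀ x ∈ M, ⟪y, x⟫ = 0)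
    (hD : ∀ y ∈ D, ∀ x ∈ M, ⟪y, x⟫ = 0) : M ≤ A := by
  intro x hx
  have hxtop : x ∈ A ⊔ B ⊔ C ⊔ D := by rw [hsup]; trivial
  obtain ⟨p, hp, k4, hk4, hx4⟩ := Submodule.mem_sup.1 hxtop
  obtain ⟨q, hq, k3, hk3, hx3⟩ := Submodule.mem_sup.1 hp
  obtain ⟨k1, hk1, k2, hk2, hx2⟩ := Submodule.mem_sup.1 hq
  have hr : x - k1 = k2 + k3 + k4 := by rw [← hx4, ← hx3, ← hx2]; abel
  have hinner : ⟪x - k1, x - k1⟫ = 0 := by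
    have hk1M : k1 ∈ M := hA hk1
    have e2 : ⟪k2, x - k1⟫ = 0 := by
      rw [inner_sub_right, hB k2 hk2 x hx, hB k2 hk2 k1 hk1M, sub_zero]
    have e3 : ⟪k3, x - k1⟫ = 0 := by
      rw [inner_sub_right, hC k3 hk3 x hx, hC k3 hk3 k1 hk1M, sub_zero]
    have e4 : ⟪k4, x - k1⟫ = 0 := by
      rw [inner_sub_right, hD k4 hk4 x hx, hD k4 hk4 k1 hk1M, sub_zero]
    calc ⟪x - k1, x - k1⟫ = ⟪k2 + k3 + k4, x - k1⟫ := by rw [hr]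
      _ = 0 := by rw [inner_add_left, inner_add_left, e2, e3, e4]; ring
  have hxk : x - k1 = 0 := inner_self_eq_zero.mp hinner
  have : x = k1 := by rwa [sub_eq_zero] at hxk
  rw [this]
  exact hk1

include h

lemma K1_le {K : Submodule ℂ H} (h1 : K.map (T₁ : H →ₗ[ℂ] H) = K) (h2 : K.map (T₂ : H →ₗ[ℂ] H) = K) :
    K ≤ Huu T₁ T₂ := by
  intro x hx
  rw [mem_Huu_iff]
  intro a b
  obtain ⟨w, hw, hwx⟩ := map_pow_self h2 b x hx
  obtain ⟨y, hy, hyw⟩ := map_pow_self h1 a w hw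
  refine ⟨((adjoint U) ^ (b*a)) y, ?_⟩
  rw [← h.symm.swap_rep b a y, hyw, hwx]

lemma K2_le {K : Submodule ℂ H} (hKc : IsClosed (K : Set H))
    (hKT2 : ∀ x ∈ K, T₂ x ∈ K) (hKA2 : ∀ x ∈ K, adjoint T₂ x ∈ K)
    (hKT1 : K.map (T₁ : H →ₗ[ℂ] H) = K) (hsh : (⨅ n : ℕ, K.map (((T₂ ^ n) : H →L[ℂ] H) : H →ₗ[ℂ] H)) = ⊥) :
    K ≤ Hus T₁ T₂ := by
  refine le_trans (shift_le h.h2 hKc hKT2 hKA2 hsh) ?_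
  refine Submodule.topologicalClosure_minimal _ (iSup_le fun m => ?_) (isClosed_Hus T₁ T₂)
  rintro _ ⟨s, hsm, rfl⟩
  obtain ⟨hsK, hsk⟩ := Submodule.mem_inf.1 hsm
  refine mem_Hus_of m ?_
  rw [mem_KK_iff]
  intro a
  obtain ⟨y, hy, hyx⟩ := map_pow_self hKT1 a s hsK
  refine ⟨y, ?_, hyx⟩
  have hye : y = ((adjoint T₁) ^ a) s := by rw [← hyx, apow_tpow h.h1]
  rw [hye]
  exact h.k2A1pow a (LinearMap.mem_ker.1 hsk)

lemma K3_le {K : Submodule ℂ H} (hKc : IsClosed (K : Set H))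
    (hKT1 : ∀ x ∈ K, T₁ x ∈ K) (hKA1 : ∀ x ∈ K, adjoint T₁ x ∈ K)
    (hKT2 : K.map (T₂ : H →ₗ[ℂ] H) = K) (hsh : (⨅ n : ℕ, K.map (((T₁ ^ n) : H →L[ℂ] H) : H →ₗ[ℂ] H)) = ⊥) :
    K ≤ Hsu T₁ T₂ := by
  rw [Hsu_eq_Hus]
  exact h.symm.K2_le hKc hKT1 hKA1 hKT2 hsh

lemma K4_le {K : Submodule ℂ H} (hKc : IsClosed (K : Set H))
    (hKT1 : ∀ x ∈ K, T₁ x ∈ K) (hKA1 : ∀ x ∈ K, adjoint T₁ x ∈ K)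
    (hKT2 : ∀ x ∈ K, T₂ x ∈ K) (hKA2 : ∀ x ∈ K, adjoint T₂ x ∈ K)
    (hsh1 : (⨅ n : ℕ, K.map (((T₁ ^ n) : H →L[ℂ] H) : H →ₗ[ℂ] H)) = ⊥) (hsh2 : (⨅ n : ℕ, K.map (((T₂ ^ n) : H →L[ℂ] H) : H →ₗ[ℂ] H)) = ⊥) :
    K ≤ Hss T₁ T₂ := by
  refine le_trans (shift_le h.h2 hKc hKT2 hKA2 hsh2) ?_
  refine Submodule.topologicalClosure_minimal _ (iSup_le fun m => ?_) (isClosed_Hss T₁ T₂)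
  rintro _ ⟨l, hl, rfl⟩
  set L := K ⊓ LinearMap.ker ((adjoint T₂ : H →L[ℂ] H) : H →ₗ[ℂ] H) with hLdef
  have hLc : IsClosed ((L : Submodule ℂ H) : Set H) := by
    rw [hLdef, Submodule.coe_inf]
    exact hKc.inter (ContinuousLinearMap.isClosed_ker _)
  have hLT1 : ∀ x ∈ L, T₁ x ∈ L := by
    intro x hx
    obtain ⟨hxK, hxk⟩ := Submodule.mem_inf.1 hx
    exact Submodule.mem_inf.2 ⟨hKT1 x hxK,
      LinearMap.mem_ker.2 (h.k2T1 (LinearMap.mem_ker.1 hxk))⟩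
  have hLA1 : ∀ x ∈ L, adjoint T₁ x ∈ L := by
    intro x hx
    obtain ⟨hxK, hxk⟩ := Submodule.mem_inf.1 hx
    exact Submodule.mem_inf.2 ⟨hKA1 x hxK,
      LinearMap.mem_ker.2 (h.k2A1 (LinearMap.mem_ker.1 hxk))⟩
  have hLsh : (⨅ n : ℕ, L.map (((T₁ ^ n) : H →L[ℂ] H) : H →ₗ[ℂ] H)) = ⊥ := by
    rw [eq_bot_iff, ← hsh1]
    exact iInf_mono fun n => Submodule.map_mono inf_le_left
  have hl2 := shift_le h.h1 hLc hLT1 hLA1 hLsh hl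
  have hcomap : (⨆ a : ℕ, (L ⊓ LinearMap.ker ((adjoint T₁ : H →L[ℂ] H) : H →ₗ[ℂ] H)).map (((T₁ ^ a) : H →L[ℂ] H) : H →ₗ[ℂ] H)).topologicalClosure
      ≤ (Hss T₁ T₂).comap (((T₂ ^ m) : H →L[ℂ] H) : H →ₗ[ℂ] H) := by
    refine Submodule.topologicalClosure_minimal _ (iSup_le fun a => ?_) ?_
    · rintro _ ⟨w, hw, rfl⟩
      obtain ⟨hwL, hwk1⟩ := Submodule.mem_inf.1 hw
      obtain ⟨hwK, hwk2⟩ := Submodule.mem_inf.1 hwL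
      have hw1 : adjoint T₁ w = 0 := LinearMap.mem_ker.1 hwk1
      have hw2 : adjoint T₂ w = 0 := LinearMap.mem_ker.1 hwk2
      rw [Submodule.mem_comap]
      show (T₂ ^ m) ((T₁ ^ a) w) ∈ Hss T₁ T₂
      have e := pt (h.w21 m a) w
      simp only [mul_apply_eq_comp] at e
      rw [e, h.Vt12]
      exact mem_Hss_of a m (h.k1Vpow _ hw1) (h.k2Vpow _ hw2)
    · exact (isClosed_Hss T₁ T₂).preimage (T₂ ^ m).continuous
  have := hcomap hl2
  rw [Submodule.mem_comap] at this
  exact this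

end DTP

open DTP in
theorem stmt14 (T₁ T₂ U : H →L[ℂ] H)
    (h1iso : adjoint T₁ ∘L T₁ = 1) (h2iso : adjoint T₂ ∘L T₂ = 1)
    (hUunit : adjoint U ∘L U = 1 ∧ U ∘L adjoint U = 1)
    (hUT₁ : Commute U T₁) (hUT₂ : Commute U T₂)
    (htw1 : T₁ ∘L T₂ = U ∘L (T₂ ∘L T₁))
    (htw2 : adjoint T₁ ∘L T₂ = adjoint U ∘L (T₂ ∘L adjoint T₁)) :
    (Huu T₁ T₂ ⊔ Hus T₁ T₂ ⊔ Hsu T₁ T₂ ⊔ Hss T₁ T₂ = ⊤) ∧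
    (Submodule.IsOrtho (Huu T₁ T₂) (Hus T₁ T₂) ∧ Submodule.IsOrtho (Huu T₁ T₂) (Hsu T₁ T₂) ∧
      Submodule.IsOrtho (Huu T₁ T₂) (Hss T₁ T₂) ∧ Submodule.IsOrtho (Hus T₁ T₂) (Hsu T₁ T₂) ∧
      Submodule.IsOrtho (Hus T₁ T₂) (Hss T₁ T₂) ∧ Submodule.IsOrtho (Hsu T₁ T₂) (Hss T₁ T₂)) ∧
    (∀ M ∈ ({Huu T₁ T₂, Hus T₁ T₂, Hsu T₁ T₂, Hss T₁ T₂} : Set (Submodule ℂ H)),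
      Reduces T₁ M ∧ Reduces T₂ M) ∧
    (UnitaryOn T₁ (Huu T₁ T₂) ∧ UnitaryOn T₂ (Huu T₁ T₂)) ∧
    (UnitaryOn T₁ (Hus T₁ T₂) ∧ ShiftOn T₂ (Hus T₁ T₂)) ∧
    (ShiftOn T₁ (Hsu T₁ T₂) ∧ UnitaryOn T₂ (Hsu T₁ T₂)) ∧
    (ShiftOn T₁ (Hss T₁ T₂) ∧ ShiftOn T₂ (Hss T₁ T₂)) ∧
    -- uniqueness of the fourfold Wold decomposition
    (∀ K₁ K₂ K₃ K₄ : Submodule ℂ H,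
      (K₁ ⊔ K₂ ⊔ K₃ ⊔ K₄ = ⊤) →
      (Submodule.IsOrtho K₁ K₂ ∧ Submodule.IsOrtho K₁ K₃ ∧ Submodule.IsOrtho K₁ K₄ ∧
        Submodule.IsOrtho K₂ K₃ ∧ Submodule.IsOrtho K₂ K₄ ∧ Submodule.IsOrtho K₃ K₄) →
      (∀ M ∈ ({K₁, K₂, K₃, K₄} : Set (Submodule ℂ H)), Reduces T₁ M ∧ Reduces T₂ M) →
      (UnitaryOn T₁ K₁ ∧ UnitaryOn T₂ K₁) →
      (UnitaryOn T₁ K₂ ∧ ShiftOn T₂ K₂) →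
      (ShiftOn T₁ K₃ ∧ UnitaryOn T₂ K₃) →
      (ShiftOn T₁ K₄ ∧ ShiftOn T₂ K₄) →
      K₁ = Huu T₁ T₂ ∧ K₂ = Hus T₁ T₂ ∧ K₃ = Hsu T₁ T₂ ∧ K₄ = Hss T₁ T₂) := by
  obtain ⟨hU1, hU2⟩ := hUunit
  have h : DTP T₁ T₂ U := ⟨h1iso, h2iso, hU1, hU2, hUT₁, hUT₂, htw1, htw2⟩
  refine ⟨h.sup_top,
    ⟨h.ortho_uu_us, h.ortho_uu_su, h.ortho_uu_ss, h.ortho_us_su, h.ortho_us_ss, h.ortho_su_ss⟩,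
    ?_, ⟨h.Huu_map_T1, h.Huu_map_T2⟩, ⟨h.Hus_map_T1, h.Hus_shift⟩,
    ⟨h.Hsu_shift, h.Hsu_map_T2⟩, ⟨h.Hss_shift1, h.Hss_shift2⟩, ?_⟩
  · intro M hM
    simp only [Set.mem_insert_iff, Set.mem_singleton_iff] at hM
    rcases hM with rfl | rfl | rfl | rfl
    · exact ⟨⟨fun x hx => h.Huu_T1 hx, fun x hx => h.Huu_A1 hx⟩,
        ⟨fun x hx => h.Huu_T2 hx, fun x hx => h.Huu_A2 hx⟩⟩
    · exact ⟨⟨fun x hx => h.Hus_T1 hx, fun x hx => h.Hus_A1 hx⟩,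
        ⟨fun x hx => h.Hus_T2 hx, fun x hx => h.Hus_A2 hx⟩⟩
    · exact ⟨⟨fun x hx => h.Hsu_T1 hx, fun x hx => h.Hsu_A1 hx⟩,
        ⟨fun x hx => h.Hsu_T2 hx, fun x hx => h.Hsu_A2 hx⟩⟩
    · exact ⟨⟨fun x hx => h.Hss_T1 hx, fun x hx => h.Hss_A1 hx⟩,
        ⟨fun x hx => h.Hss_T2 hx, fun x hx => h.Hss_A2 hx⟩⟩
  · rintro K₁ K₂ K₃ K₄ hsup ⟨o12, o13, o14, o23, o24, o34⟩ hred ⟨u11, u12⟩ ⟨u21, s22⟩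
      ⟨s31, u32⟩ ⟨s41, s42⟩
    have r2 := hred K₂ (by simp)
    have r3 := hred K₃ (by simp)
    have r4 := hred K₄ (by simp)
    have hK2c : IsClosed (K₂ : Set H) := by
      have hsup2 : K₂ ⊔ (K₁ ⊔ K₃ ⊔ K₄) = ⊤ := by rw [← hsup]; ac_rfl
      have ho : K₂ ⟂ (K₁ ⊔ K₃ ⊔ K₄) := Submodule.isOrtho_sup_right.2
        ⟨Submodule.isOrtho_sup_right.2 ⟨o12.symm, o23⟩, o24⟩
      rw [← compl_of_sup hsup2 ho]
      exact Submodule.isClosed_orthogonal _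
    have hK3c : IsClosed (K₃ : Set H) := by
      have hsup2 : K₃ ⊔ (K₁ ⊔ K₂ ⊔ K₄) = ⊤ := by rw [← hsup]; ac_rfl
      have ho : K₃ ⟂ (K₁ ⊔ K₂ ⊔ K₄) := Submodule.isOrtho_sup_right.2
        ⟨Submodule.isOrtho_sup_right.2 ⟨o13.symm, o23.symm⟩, o34⟩
      rw [← compl_of_sup hsup2 ho]
      exact Submodule.isClosed_orthogonal _
    have hK4c : IsClosed (K₄ : Set H) := by
      have hsup2 : K₄ ⊔ (K₁ ⊔ K₂ ⊔ K₃) = ⊤ := by rw [← hsup]; ac_rfl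
      have ho : K₄ ⟂ (K₁ ⊔ K₂ ⊔ K₃) := Submodule.isOrtho_sup_right.2
        ⟨Submodule.isOrtho_sup_right.2 ⟨o14.symm, o24.symm⟩, o34.symm⟩
      rw [← compl_of_sup hsup2 ho]
      exact Submodule.isClosed_orthogonal _
    have hle1 : K₁ ≤ Huu T₁ T₂ := h.K1_le u11 u12
    have hle2 : K₂ ≤ Hus T₁ T₂ := h.K2_le hK2c r2.2.1 r2.2.2 u21 s22
    have hle3 : K₃ ≤ Hsu T₁ T₂ := h.K3_le hK3c r3.1.1 r3.1.2 u32 s31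
    have hle4 : K₄ ≤ Hss T₁ T₂ := h.K4_le hK4c r4.1.1 r4.1.2 r4.2.1 r4.2.2 s41 s42
    have hge1 : Huu T₁ T₂ ≤ K₁ := sandwich hsup hle1
      (fun y hy x hx => h.ortho_uu_us.symm.inner_eq (hle2 hy) hx)
      (fun y hy x hx => h.ortho_uu_su.symm.inner_eq (hle3 hy) hx)
      (fun y hy x hx => h.ortho_uu_ss.symm.inner_eq (hle4 hy) hx)
    have hge2 : Hus T₁ T₂ ≤ K₂ := by
      have hsup' : K₂ ⊔ K₁ ⊔ K₃ ⊔ K₄ = ⊤ := by rw [← hsup]; ac_rfl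
      exact sandwich hsup' hle2
        (fun y hy x hx => h.ortho_uu_us.inner_eq (hle1 hy) hx)
        (fun y hy x hx => h.ortho_us_su.symm.inner_eq (hle3 hy) hx)
        (fun y hy x hx => h.ortho_us_ss.symm.inner_eq (hle4 hy) hx)
    have hge3 : Hsu T₁ T₂ ≤ K₃ := by
      have hsup' : K₃ ⊔ K₁ ⊔ K₂ ⊔ K₄ = ⊤ := by rw [← hsup]; ac_rfl
      exact sandwich hsup' hle3
        (fun y hy x hx => h.ortho_uu_su.inner_eq (hle1 hy) hx)
        (fun y hy x hx => h.ortho_us_su.inner_eq (hle2 hy) hx)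
        (fun y hy x hx => h.ortho_su_ss.symm.inner_eq (hle4 hy) hx)
    have hge4 : Hss T₁ T₂ ≤ K₄ := by
      have hsup' : K₄ ⊔ K₁ ⊔ K₂ ⊔ K₃ = ⊤ := by rw [← hsup]; ac_rfl
      exact sandwich hsup' hle4
        (fun y hy x hx => h.ortho_uu_ss.inner_eq (hle1 hy) hx)
        (fun y hy x hx => h.ortho_us_ss.inner_eq (hle2 hy) hx)
        (fun y hy x hx => h.ortho_su_ss.inner_eq (hle3 hy) hx)
    exact ⟨le_antisymm hle1 hge1, le_antisymm hle2 hge2,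
      le_antisymm hle3 hge3, le_antisymm hle4 hge4⟩
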